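/- Let Γ be a group. The unit 1 is an algebraic interior point of the cone Σ²ℂ[Γ] in the real vector space ℂ[Γ]^h, quantitatively: for every a ∈ ℂ[Γ]^h and every real ε ≥ 0 with ε·‖a‖₁ ≤ 1, one has 1 + ε·a ∈ Σ²ℂ[Γ]. In particular, ‖a‖₁·1 − a ∈ Σ²ℂ[Γ] for every a ∈ ℂ[Γ]^h. -/

import Mathlib

noncomputable section

universe u

variable (Γ : Type u) [Group Γ]

/-- The involution of the complex group algebra `ℂ[Γ]`:
`(∑ a_g·g)* = ∑ conj(a_g)·g⁻¹`. -/
def gstar (a : MonoidAlgebra ℂ Γ) : MonoidAlgebra ℂ Γ :=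
  a.coeff.sum fun g c => MonoidAlgebra.single g⁻¹ (starRingEnd ℂ c)

/-- The `ℓ¹`-norm of an element of `ℂ[Γ]`: `‖∑ a_g·g‖₁ = ∑ |a_g|`. -/
def l1norm (a : MonoidAlgebra ℂ Γ) : ℝ :=
  a.coeff.sum fun _ c => ‖c‖

/-- The set `Σ²ℂ[Γ]` of sums of hermitian squares in the group algebra. -/
def SOS : Set (MonoidAlgebra ℂ Γ) :=
  {x | ∃ (n : ℕ) (a : Fin n → MonoidAlgebra ℂ Γ), x = ∑ i, gstar Γ (a i) * a i}

/-- The hermitian elements `ℂ[Γ]^h = {a : a* = a}`. -/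
def herm : Set (MonoidAlgebra ℂ Γ) := {a | gstar Γ a = a}

/-- The augmentation homomorphism `ε : ℂ[Γ] → ℂ`, `∑ a_g·g ↦ ∑ a_g`. -/
def aug : MonoidAlgebra ℂ Γ →ₐ[ℂ] ℂ := MonoidAlgebra.lift ℂ ℂ Γ 1

/-- The augmentation ideal `ω(Γ) = ker ε`. -/
def omega : Set (MonoidAlgebra ℂ Γ) := {a | aug Γ a = 0}

/-- The hermitian part `ω(Γ)^h` of the augmentation ideal. -/
def omegaH : Set (MonoidAlgebra ℂ Γ) := {a | a ∈ omega Γ ∧ gstar Γ a = a}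

/-- `Σ²ω(Γ)`: sums of hermitian squares of elements of the augmentation ideal. -/
def SOSomega : Set (MonoidAlgebra ℂ Γ) :=
  {x | ∃ (n : ℕ) (a : Fin n → MonoidAlgebra ℂ Γ),
    (∀ i, a i ∈ omega Γ) ∧ x = ∑ i, gstar Γ (a i) * a i}

/-- `ω²(Γ)`, the `ℂ`-span of products of two elements of the augmentation ideal. -/
def omegaSq : Set (MonoidAlgebra ℂ Γ) :=
  (Submodule.span ℂ {x : MonoidAlgebra ℂ Γ |
    ∃ a ∈ omega Γ, ∃ b ∈ omega Γ, x = a * b} : Submodule ℂ (MonoidAlgebra ℂ Γ))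

/-- `c(g) = g - 1 ∈ ω(Γ)`. -/
def cE (g : Γ) : MonoidAlgebra ℂ Γ := MonoidAlgebra.of ℂ Γ g - 1

/-- The Laplace operator `Δ(S) = |S| - ∑_{s ∈ S} s` of a finite subset `S ⊆ Γ`. -/
def Delta (S : Finset Γ) : MonoidAlgebra ℂ Γ :=
  (S.card : MonoidAlgebra ℂ Γ) - ∑ s ∈ S, MonoidAlgebra.of ℂ Γ s


lemma gstar_single (g : Γ) (c : ℂ) :
    gstar Γ (MonoidAlgebra.single g c) = MonoidAlgebra.single g⁻¹ (starRingEnd ℂ c) := by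
  unfold gstar
  rw [MonoidAlgebra.coeff_single]
  exact Finsupp.sum_single_index (by simp)

lemma gstar_add (x y : MonoidAlgebra ℂ Γ) :
    gstar Γ (x + y) = gstar Γ x + gstar Γ y := by
  unfold gstar
  rw [MonoidAlgebra.coeff_add]
  exact Finsupp.sum_add_index' (by simp) (by intros; simp [MonoidAlgebra.single_add, map_add])

lemma gstar_zero : gstar Γ (0 : MonoidAlgebra ℂ Γ) = 0 := by
  unfold gstar; rw [MonoidAlgebra.coeff_zero]; exact Finsupp.sum_zero_index

lemma gstar_neg (x : MonoidAlgebra ℂ Γ) : gstar Γ (-x) = -gstar Γ x := by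
  have h := gstar_add Γ x (-x)
  rw [add_neg_cancel, gstar_zero] at h
  exact eq_neg_of_add_eq_zero_right h.symm

lemma gstar_smul (z : ℂ) (x : MonoidAlgebra ℂ Γ) :
    gstar Γ (z • x) = (starRingEnd ℂ z) • gstar Γ x := by
  unfold gstar
  rw [MonoidAlgebra.coeff_smul, Finsupp.smul_sum, Finsupp.sum_smul_index (by simp)]
  simp [map_mul, MonoidAlgebra.smul_single]

lemma SOS_zero : (0 : MonoidAlgebra ℂ Γ) ∈ SOS Γ := ⟨0, fun _ => 0, by simp⟩

lemma SOS_sq (b : MonoidAlgebra ℂ Γ) : gstar Γ b * b ∈ SOS Γ := ⟨1, fun _ => b, by simp⟩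

lemma SOS_add {x y : MonoidAlgebra ℂ Γ} (hx : x ∈ SOS Γ) (hy : y ∈ SOS Γ) :
    x + y ∈ SOS Γ := by
  obtain ⟨n, u, rfl⟩ := hx; obtain ⟨m, v, rfl⟩ := hy
  refine ⟨n + m, Fin.append u v, ?_⟩
  rw [Fin.sum_univ_add]
  simp [Fin.append_left, Fin.append_right]

lemma SOS_sum {ι : Type*} (s : Finset ι) (f : ι → MonoidAlgebra ℂ Γ)
    (h : ∀ i ∈ s, f i ∈ SOS Γ) : ∑ i ∈ s, f i ∈ SOS Γ :=
  Finset.sum_induction f (· ∈ SOS Γ) (fun _ _ => SOS_add Γ) (SOS_zero Γ) h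

lemma SOS_smul {t : ℝ} (ht : 0 ≤ t) {x : MonoidAlgebra ℂ Γ} (hx : x ∈ SOS Γ) :
    (t : ℂ) • x ∈ SOS Γ := by
  obtain ⟨n, u, rfl⟩ := hx
  refine ⟨n, fun i => ((Real.sqrt t : ℝ) : ℂ) • u i, ?_⟩
  rw [Finset.smul_sum]
  refine Finset.sum_congr rfl fun i _ => ?_
  rw [gstar_smul, smul_mul_assoc, mul_smul_comm, smul_smul, Complex.conj_ofReal,
    ← Complex.ofReal_mul, Real.mul_self_sqrt ht]

lemma SOS_one : (1 : MonoidAlgebra ℂ Γ) ∈ SOS Γ := by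
  have h1 : gstar Γ (1 : MonoidAlgebra ℂ Γ) = 1 := by
    rw [MonoidAlgebra.one_def, gstar_single]; simp
  have := SOS_sq Γ 1
  rwa [h1, mul_one] at this

lemma SOS_key (g : Γ) (c : ℂ) :
    ((2 * ‖c‖ : ℝ) : ℂ) • (1 : MonoidAlgebra ℂ Γ)
      + (MonoidAlgebra.single g c + MonoidAlgebra.single g⁻¹ (starRingEnd ℂ c)) ∈ SOS Γ := by
  by_cases hc : c = 0
  · simpa [hc] using SOS_zero Γ
  · set r := ‖c‖ with hr
    have hr0 : 0 < r := norm_pos_iff.2 hc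
    set s := Real.sqrt r with hs
    have hs0 : 0 < s := Real.sqrt_pos.2 hr0
    have hsC : (s : ℂ) ≠ 0 := by exact_mod_cast hs0.ne'
    have hss : (s : ℂ) * s = (r : ℂ) := by
      rw [← Complex.ofReal_mul, Real.mul_self_sqrt hr0.le]
    have hcc : starRingEnd ℂ c * c = ((r : ℂ)) * r := by
      rw [Complex.conj_mul', ← hr]
      ring
    have key : gstar Γ (MonoidAlgebra.single (1:Γ) (s:ℂ) + MonoidAlgebra.single g (c / s))
        * (MonoidAlgebra.single (1:Γ) (s:ℂ) + MonoidAlgebra.single g (c / s))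
        = ((2 * r : ℝ) : ℂ) • 1 + (MonoidAlgebra.single g c + MonoidAlgebra.single g⁻¹ (starRingEnd ℂ c)) := by
      rw [gstar_add, gstar_single, gstar_single, Complex.conj_ofReal, inv_one, map_div₀,
        Complex.conj_ofReal]
      rw [add_mul, mul_add, mul_add, MonoidAlgebra.single_mul_single,
        MonoidAlgebra.single_mul_single, MonoidAlgebra.single_mul_single,
        MonoidAlgebra.single_mul_single]
      rw [MonoidAlgebra.one_def, MonoidAlgebra.smul_single]
      simp only [one_mul, mul_one, inv_mul_cancel, smul_eq_mul]
      have e1 : (s : ℂ) * (c / s) = c := by field_simp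
      have e2 : starRingEnd ℂ c / s * s = starRingEnd ℂ c := by field_simp
      have e3 : starRingEnd ℂ c / s * (c / s) = (r : ℂ) := by
        field_simp
        rw [hcc, sq, hss]
      rw [e1, e2, e3, hss]
      have e4 : ((2 * r : ℝ) : ℂ) = (r : ℂ) + r := by push_cast; ring
      rw [e4, MonoidAlgebra.single_add]
      abel
    rw [← key]; exact SOS_sq Γ _

lemma l1norm_nonneg (a : MonoidAlgebra ℂ Γ) : 0 ≤ l1norm Γ a := by
  unfold l1norm Finsupp.sum
  exact Finset.sum_nonneg fun g _ => (norm_nonneg _)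

lemma l1norm_neg (a : MonoidAlgebra ℂ Γ) : l1norm Γ (-a) = l1norm Γ a := by
  unfold l1norm Finsupp.sum
  rw [MonoidAlgebra.coeff_neg, Finsupp.support_neg]
  refine Finset.sum_congr rfl fun g _ => ?_
  show ‖(-a.coeff) g‖ = ‖a.coeff g‖
  rw [Finsupp.neg_apply, norm_neg]

lemma l1norm_pos {a : MonoidAlgebra ℂ Γ} (ha : a ≠ 0) : 0 < l1norm Γ a := by
  unfold l1norm Finsupp.sum
  refine Finset.sum_pos (fun g hg => ?_) ?_
  · exact norm_pos_iff.2 (Finsupp.mem_support_iff.1 hg)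
  · exact Finsupp.support_nonempty_iff.2 (by simpa using ha)

lemma herm_neg {a : MonoidAlgebra ℂ Γ} (ha : a ∈ herm Γ) : -a ∈ herm Γ := by
  have : gstar Γ (-a) = -gstar Γ a := gstar_neg Γ a
  simp only [herm, Set.mem_setOf_eq] at ha ⊢
  rw [this, ha]

lemma main_part1 (a : MonoidAlgebra ℂ Γ) (ha : a ∈ herm Γ) (ε : ℝ) (hε : 0 ≤ ε)
    (h1 : ε * l1norm Γ a ≤ 1) : 1 + (ε : ℂ) • a ∈ SOS Γ := by
  have hsum1 : a.coeff.sum (fun g c => MonoidAlgebra.single g (((ε/2 : ℝ) : ℂ) * c))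
      = ((ε/2 : ℝ) : ℂ) • a := by
    conv_rhs => rw [← MonoidAlgebra.sum_coeff_single a]
    rw [Finsupp.smul_sum]
    refine Finset.sum_congr rfl fun g _ => ?_
    show MonoidAlgebra.single g (((ε/2 : ℝ) : ℂ) * a.coeff g) = ((ε/2 : ℝ) : ℂ) • MonoidAlgebra.single g (a.coeff g)
    rw [MonoidAlgebra.smul_single, smul_eq_mul]
  have hsum2 : a.coeff.sum (fun g c => MonoidAlgebra.single g⁻¹ (starRingEnd ℂ (((ε/2 : ℝ) : ℂ) * c)))
      = ((ε/2 : ℝ) : ℂ) • a := by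
    have hg : a.coeff.sum (fun g c => MonoidAlgebra.single g⁻¹ (starRingEnd ℂ (((ε/2 : ℝ) : ℂ) * c)))
        = ((ε/2 : ℝ) : ℂ) • gstar Γ a := by
      unfold gstar
      rw [Finsupp.smul_sum]
      refine Finset.sum_congr rfl fun g _ => ?_
      show MonoidAlgebra.single g⁻¹ (starRingEnd ℂ (((ε/2 : ℝ) : ℂ) * a.coeff g))
          = ((ε/2 : ℝ) : ℂ) • MonoidAlgebra.single g⁻¹ (starRingEnd ℂ (a.coeff g))
      rw [map_mul, Complex.conj_ofReal, MonoidAlgebra.smul_single, smul_eq_mul]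
    rw [hg, ha]
  have hsum3 : a.coeff.sum (fun g c => ((ε * ‖c‖ : ℝ) : ℂ) • (1 : MonoidAlgebra ℂ Γ))
      = ((ε * l1norm Γ a : ℝ) : ℂ) • 1 := by
    unfold l1norm Finsupp.sum
    rw [← Finset.sum_smul]
    congr 1
    push_cast
    rw [Finset.mul_sum]
  have decomp : (1 : MonoidAlgebra ℂ Γ) + (ε : ℂ) • a
      = ((1 - ε * l1norm Γ a : ℝ) : ℂ) • 1
        + a.coeff.sum (fun g c => ((ε * ‖c‖ : ℝ) : ℂ) • 1
            + (MonoidAlgebra.single g (((ε/2 : ℝ) : ℂ) * c)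
               + MonoidAlgebra.single g⁻¹ (starRingEnd ℂ (((ε/2 : ℝ) : ℂ) * c)))) := by
    rw [Finsupp.sum_add, Finsupp.sum_add, hsum1, hsum2, hsum3]
    push_cast
    module
  rw [decomp]
  refine SOS_add Γ (SOS_smul Γ (by linarith) (SOS_one Γ)) ?_
  rw [Finsupp.sum]
  refine SOS_sum Γ _ _ fun g hg => ?_
  have habs : (ε * ‖a.coeff g‖ : ℝ) = 2 * ‖((ε/2 : ℝ) : ℂ) * (a.coeff g)‖ := by
    rw [norm_mul, Complex.norm_real, Real.norm_eq_abs, abs_of_nonneg (by linarith)]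
    ring
  rw [habs]
  exact SOS_key Γ g _


/-- **`1` is an algebraic interior point of `Σ²ℂ[Γ]` in `ℂ[Γ]^h`.**  Quantitatively:
for every hermitian `a` and every real `ε ≥ 0` with `ε·‖a‖₁ ≤ 1` one has
`1 + ε·a ∈ Σ²ℂ[Γ]`.  In particular `1` is an algebraic interior point, and
`‖a‖₁·1 - a ∈ Σ²ℂ[Γ]` for every hermitian `a`. -/
theorem one_algebraic_interior_SOS :
    (∀ a ∈ herm Γ, ∀ ε : ℝ, 0 ≤ ε → ε * l1norm Γ a ≤ 1 →
      1 + (ε : ℂ) • a ∈ SOS Γ) ∧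
    (∀ a ∈ herm Γ, ∃ ε : ℝ, 0 < ε ∧ 1 + (ε : ℂ) • a ∈ SOS Γ) ∧
    (∀ a ∈ herm Γ, ((l1norm Γ a : ℝ) : ℂ) • (1 : MonoidAlgebra ℂ Γ) - a ∈ SOS Γ) := by
  refine ⟨main_part1 Γ, fun a ha => ?_, fun a ha => ?_⟩
  · refine ⟨1 / (l1norm Γ a + 1), ?_, ?_⟩
    · have := l1norm_nonneg Γ a
      positivity
    · refine main_part1 Γ a ha _ (by have := l1norm_nonneg Γ a; positivity) ?_
      have hL := l1norm_nonneg Γ a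
      rw [div_mul_eq_mul_div, one_mul, div_le_one (by linarith)]
      linarith
  · by_cases h0 : a = 0
    · subst h0
      have : l1norm Γ (0 : MonoidAlgebra ℂ Γ) = 0 := by
        unfold l1norm; rw [MonoidAlgebra.coeff_zero]; exact Finsupp.sum_zero_index
      rw [this]
      simpa using SOS_zero Γ
    · have hL : 0 < l1norm Γ a := l1norm_pos Γ h0
      have hmem : 1 + ((1 / l1norm Γ a : ℝ) : ℂ) • (-a) ∈ SOS Γ := by
        refine main_part1 Γ (-a) (herm_neg Γ ha) _ (by positivity) ?_
        rw [l1norm_neg]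
        rw [div_mul_eq_mul_div, one_mul, div_le_one hL]
      have := SOS_smul Γ hL.le hmem
      have heq : ((l1norm Γ a : ℝ) : ℂ) • (1 + ((1 / l1norm Γ a : ℝ) : ℂ) • (-a))
          = ((l1norm Γ a : ℝ) : ℂ) • (1 : MonoidAlgebra ℂ Γ) - a := by
        rw [smul_add, smul_smul, ← Complex.ofReal_mul,
          mul_one_div, div_self hL.ne', Complex.ofReal_one, one_smul]
        abel
      rwa [heq] at this
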